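/- Let X ⊂ P^N be a non-degenerate scroll over a smooth curve. If the secant defect δ(X) = 2n + 1 − dim SX is positive, then SX = P^N. -/

import Mathlib

open MvPolynomial

noncomputable section

/-- Affine space `ℂ^{N+1}`. -/
abbrev Aff (N : ℕ) := Fin (N + 1) → ℂ

/-- Projective `N`-space over `ℂ`. -/
abbrev Proj (N : ℕ) := Projectivization ℂ (Aff N)

/-- Zariski-closed subsets of affine space: common zero loci of polynomials. -/
def zClosed {N : ℕ} (V : Set (Aff N)) : Prop :=
  ∃ S : Set (MvPolynomial (Fin (N + 1)) ℂ), V = {x | ∀ p ∈ S, eval x p = 0}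

/-- Zariski closure in affine space. -/
def zClosure {N : ℕ} (V : Set (Aff N)) : Set (Aff N) :=
  ⋂₀ {C | zClosed C ∧ V ⊆ C}

/-- Irreducibility of a subset of affine space w.r.t. the Zariski topology. -/
def zIrred {N : ℕ} (V : Set (Aff N)) : Prop :=
  V.Nonempty ∧ ∀ C₁ C₂ : Set (Aff N), zClosed C₁ → zClosed C₂ → V ⊆ C₁ ∪ C₂ →
    V ⊆ C₁ ∨ V ⊆ C₂

/-- Dimension of a subset of affine space: Krull dimension of the poset of
irreducible Zariski-closed subsets contained in it. -/
def adim {N : ℕ} (V : Set (Aff N)) : WithBot ℕ∞ :=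
  Order.krullDim {W : Set (Aff N) // zClosed W ∧ zIrred W ∧ W ⊆ V}

/-- The affine cone over a set of projective points. -/
def cone {N : ℕ} (X : Set (Proj N)) : Set (Aff N) :=
  {v | ∃ hv : v ≠ 0, Projectivization.mk ℂ v hv ∈ X} ∪ {0}

/-- A projectively closed set. -/
def pClosed {N : ℕ} (X : Set (Proj N)) : Prop := zClosed (cone X)

/-- Projective Zariski closure. -/
def pClosure {N : ℕ} (X : Set (Proj N)) : Set (Proj N) :=
  {z | z.rep ∈ zClosure (cone X)}

/-- The vanishing ideal (as a set of polynomials) of a subset of `ℂ^ι`. -/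
def vanishSet {ι : Type} [Fintype ι] (V : Set (ι → ℂ)) : Set (MvPolynomial ι ℂ) :=
  {p | ∀ v ∈ V, eval v p = 0}

/-- The differential of a polynomial at a point, as a linear form. -/
def polyDiff {ι : Type} [Fintype ι] (v : ι → ℂ) (p : MvPolynomial ι ℂ) :
    (ι → ℂ) →ₗ[ℂ] ℂ :=
  ∑ i, eval v (pderiv i p) • LinearMap.proj i

/-- The (embedded, affine) Zariski tangent space of `V` at `v`. -/
def tangentAt {ι : Type} [Fintype ι] (V : Set (ι → ℂ)) (v : ι → ℂ) :
    Submodule ℂ (ι → ℂ) :=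
  ⨅ p ∈ vanishSet V, LinearMap.ker (polyDiff v p)

/-- The affine cone over the embedded projective tangent space of `X` at `x`. -/
def projTangent {N : ℕ} (X : Set (Proj N)) (x : Proj N) : Submodule ℂ (Aff N) :=
  tangentAt (cone X) x.rep

/-- The embedded projective tangent space `T_x X ⊆ ℙ^N` as a set of points. -/
def tangentSet {N : ℕ} (X : Set (Proj N)) (x : Proj N) : Set (Proj N) :=
  {z | z.submodule ≤ projTangent X x}

/-- `X` is a closed irreducible smooth projective variety of dimension `n`
(the affine cone has dimension `n+1`, and every embedded tangent space has
linear dimension `n+1`). -/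
def SmoothVariety {N : ℕ} (X : Set (Proj N)) (n : ℕ) : Prop :=
  pClosed X ∧ zIrred (cone X) ∧ adim (cone X) = ((n + 1 : ℕ) : WithBot ℕ∞) ∧
    ∀ x ∈ X, Module.finrank ℂ (projTangent X x) = n + 1

/-- Non-degeneracy: `X` is contained in no hyperplane. -/
def Nondeg {N : ℕ} (X : Set (Proj N)) : Prop :=
  Submodule.span ℂ (cone X) = ⊤

/-- The projective line through two points (all of `ℙ^N` if they coincide... it
is the projectivization of the span of the two representatives). -/
def pline {N : ℕ} (x y : Proj N) : Set (Proj N) :=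
  {z | z.submodule ≤ x.submodule ⊔ y.submodule}

/-- The relative secant (join) variety `S(Y,X)`: closure of the union of the
lines joining a point of `Y` to a distinct point of `X`. -/
def joinVar {N : ℕ} (Y X : Set (Proj N)) : Set (Proj N) :=
  pClosure {z | ∃ y ∈ Y, ∃ x ∈ X, y ≠ x ∧ z ∈ pline y x}

/-- The secant variety `SX`. -/
def secantVar {N : ℕ} (X : Set (Proj N)) : Set (Proj N) := joinVar X X

/-- The relative tangent variety `T(Y,X) = ⋃_{y ∈ Y} T_y X`. -/
def relTangent {N : ℕ} (Y X : Set (Proj N)) : Set (Proj N) :=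
  ⋃ y ∈ Y, tangentSet X y

/-- The hyperplane (as a linear subspace of `ℂ^{N+1}`) with coordinate vector `a`. -/
def hypSub {N : ℕ} (a : Aff N) : Submodule ℂ (Aff N) :=
  LinearMap.ker (∑ i, a i • (LinearMap.proj i : (Aff N) →ₗ[ℂ] ℂ))

/-- The dual variety of `X`, identified with a subvariety of `ℙ^N` via
coordinates of hyperplanes: closure of the set of hyperplanes tangent to `X`
at some point. -/
def dualVar {N : ℕ} (X : Set (Proj N)) : Set (Proj N) :=
  pClosure {h | ∃ x ∈ X, projTangent X x ≤ hypSub h.rep}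

/-- The entry locus `Σ_z` of a point `z` of the secant variety. -/
def entryLocus {N : ℕ} (X : Set (Proj N)) (z : Proj N) : Set (Proj N) :=
  pClosure {x | x ∈ X ∧ ∃ x' ∈ X, x ≠ x' ∧ z ∈ pline x x'}

/-- A scroll structure on `X ⊆ ℙ^N`: a smooth base variety `W` (of dimension
`b`, embedded in some projective space) together with a family of disjoint
linearly embedded fibres of dimension `n - b` covering `X`. -/
structure ScrollOn (N : ℕ) (X : Set (Proj N)) (n b : ℕ) where
  M : ℕ
  W : Set (Proj M)
  baseSmooth : SmoothVariety W b
  fdim : ℕ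
  dim_eq : n = b + fdim
  Fsub : Proj M → Submodule ℂ (Aff N)
  fib_rank : ∀ w ∈ W, Module.finrank ℂ (Fsub w) = fdim + 1
  cover : X = ⋃ w ∈ W, {z : Proj N | z.submodule ≤ Fsub w}
  disjoint : ∀ w ∈ W, ∀ w' ∈ W, w ≠ w' →
    ∀ z : Proj N, z.submodule ≤ Fsub w → z.submodule ≤ Fsub w' → False

/-- The fibre of a scroll over a base point. -/
def ScrollOn.fib {N : ℕ} {X : Set (Proj N)} {n b : ℕ} (S : ScrollOn N X n b)
    (w : Proj S.M) : Set (Proj N) :=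
  {z | z.submodule ≤ S.Fsub w}

/-- The coordinate vector of the Segre product of two vectors. -/
def segreVec (a b : ℕ) (y : Fin a → ℂ) (w : Fin b → ℂ) : Fin a × Fin b → ℂ :=
  fun p => y p.1 * w p.2

/-- `X` is (projectively equivalent to) the Segre embedding
`ℙ^{a-1} × ℙ^{b-1} ⊆ ℙ^{ab-1}`. -/
def IsSegre {N : ℕ} (a b : ℕ) (X : Set (Proj N)) : Prop :=
  ∃ e : (Fin a × Fin b → ℂ) ≃ₗ[ℂ] (Aff N),
    X = {z | ∃ y : Fin a → ℂ, ∃ w : Fin b → ℂ,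
      z.submodule = Submodule.span ℂ {e (segreVec a b y w)}}

/-- `X` is an isomorphic projection of the Segre embedding
`ℙ^{a-1} × ℙ^{b-1}`: the image of the Segre variety under a linear projection
which is injective on points and on embedded tangent spaces of the Segre. -/
def IsProjectedSegre {N : ℕ} (a b : ℕ) (X : Set (Proj N)) : Prop :=
  ∃ L : (Fin a × Fin b → ℂ) →ₗ[ℂ] (Aff N),
    (∀ y w, segreVec a b y w ≠ 0 → L (segreVec a b y w) ≠ 0) ∧
    (∀ y w y' w', segreVec a b y w ≠ 0 → segreVec a b y' w' ≠ 0 →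
      Submodule.span ℂ {L (segreVec a b y w)} =
        Submodule.span ℂ {L (segreVec a b y' w')} →
      Submodule.span ℂ {segreVec a b y w} =
        Submodule.span ℂ {segreVec a b y' w'}) ∧
    (∀ y w, segreVec a b y w ≠ 0 →
      Disjoint
        (tangentAt {v | ∃ y' w', v = segreVec a b y' w'} (segreVec a b y w))
        (LinearMap.ker L)) ∧
    X = {z | ∃ y w, segreVec a b y w ≠ 0 ∧
      z.submodule = Submodule.span ℂ {L (segreVec a b y w)}}

end
noncomputable section

/-- The quadratic Veronese coordinates of a vector in `ℂ³`. -/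
def veroQ (y : Fin 3 → ℂ) : Fin 6 → ℂ :=
  ![y 0 * y 0, y 0 * y 1, y 0 * y 2, y 1 * y 1, y 1 * y 2, y 2 * y 2]

/-- `X` is (projectively equivalent to) the Veronese surface in `ℙ⁵`. -/
def IsVeroneseSurface {N : ℕ} (X : Set (Proj N)) : Prop :=
  ∃ h : N + 1 = 6, ∃ g : (Aff N) ≃ₗ[ℂ] (Aff N),
    X = {z | ∃ y : Fin 3 → ℂ, y ≠ 0 ∧
      z.submodule = Submodule.span ℂ {g fun i => veroQ y (Fin.cast h i)}}

/-- The coordinates of a pure spinor: `(1, x_{ij}, Pf_i(x))` for a skew matrix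
with upper entries `x i j` (`i < j`); the affine parametrization of the
10-dimensional spinor variety `S₄ ⊆ ℙ^{15}`. -/
def spinVec (x : Fin 5 → Fin 5 → ℂ) : Fin 16 → ℂ :=
  ![1, x 0 1, x 0 2, x 0 3, x 0 4, x 1 2, x 1 3, x 1 4, x 2 3, x 2 4, x 3 4,
    x 1 2 * x 3 4 - x 1 3 * x 2 4 + x 1 4 * x 2 3,
    x 0 2 * x 3 4 - x 0 3 * x 2 4 + x 0 4 * x 2 3,
    x 0 1 * x 3 4 - x 0 3 * x 1 4 + x 0 4 * x 1 3,
    x 0 1 * x 2 4 - x 0 2 * x 1 4 + x 0 4 * x 1 2,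
    x 0 1 * x 2 3 - x 0 2 * x 1 3 + x 0 3 * x 1 2]

/-- `X` is (projectively equivalent to) the 10-dimensional spinor variety
`S₄ ⊆ ℙ^{15}`. -/
def IsSpinorVariety {N : ℕ} (X : Set (Proj N)) : Prop :=
  ∃ e : (Fin 16 → ℂ) ≃ₗ[ℂ] (Aff N),
    X = pClosure {z | ∃ x : Fin 5 → Fin 5 → ℂ,
      z.submodule = Submodule.span ℂ {e (spinVec x)}}

/-- The vanishing ideal of a subset of affine space. -/
def vanishIdeal {N : ℕ} (V : Set (Aff N)) : Ideal (MvPolynomial (Fin (N + 1)) ℂ) where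
  carrier := vanishSet V
  add_mem' := by intro a b ha hb v hv; simp [vanishSet] at *; simp [ha v hv, hb v hv]
  zero_mem' := by intro v hv; simp
  smul_mem' := by intro c a ha v hv; simp [vanishSet] at *; simp [ha v hv]

/-- Saturation of a homogeneous ideal with respect to the irrelevant ideal. -/
def satIdeal {N : ℕ} (J : Ideal (MvPolynomial (Fin (N + 1)) ℂ)) :
    Ideal (MvPolynomial (Fin (N + 1)) ℂ) where
  carrier := {p | ∃ k : ℕ, ∀ i : Fin (N + 1), (X i) ^ k * p ∈ J}
  zero_mem' := ⟨0, fun i => by simp⟩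
  add_mem' := by
    rintro a b ⟨k, hk⟩ ⟨l, hl⟩
    refine ⟨k + l, fun i => ?_⟩
    have h : (X i : MvPolynomial (Fin (N + 1)) ℂ) ^ (k + l) * (a + b) =
        (X i) ^ l * ((X i) ^ k * a) + (X i) ^ k * ((X i) ^ l * b) := by ring
    rw [h]
    exact J.add_mem (J.mul_mem_left _ (hk i)) (J.mul_mem_left _ (hl i))
  smul_mem' := by
    rintro c a ⟨k, hk⟩
    refine ⟨k, fun i => ?_⟩
    have h : (X i : MvPolynomial (Fin (N + 1)) ℂ) ^ k * (c • a) =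
        c * ((X i) ^ k * a) := by rw [smul_eq_mul]; ring
    rw [h]
    exact J.mul_mem_left _ (hk i)

/-- The projective scheme `Proj` of the quotient by `J` is normal: every
localization at a prime not containing the irrelevant ideal is a normal
domain. -/
def ProjNormal {N : ℕ} (J : Ideal (MvPolynomial (Fin (N + 1)) ℂ)) : Prop :=
  ∀ P : Ideal (MvPolynomial (Fin (N + 1)) ℂ ⧸ J), ∀ hP : P.IsPrime,
    ¬ (Ideal.map (Ideal.Quotient.mk J)
        (Ideal.span (Set.range MvPolynomial.X)) ≤ P) →
      IsDomain (@Localization.AtPrime _ _ P hP) ∧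
      IsIntegrallyClosed (@Localization.AtPrime _ _ P hP)

/-- Data describing an algebraic line bundle on `X ⊆ ℙ^N` by a covering of
`X` by complements of closed sets and degree-zero rational transition
functions satisfying the cocycle condition on `X`. -/
structure LineBundleData (N : ℕ) (X : Set (Proj N)) where
  ι : Type
  Z : ι → Set (Aff N)
  Zclosed : ∀ i, zClosed (Z i)
  covers : ∀ v ∈ cone X, v ≠ 0 → ∃ i, v ∉ Z i
  num : ι → ι → MvPolynomial (Fin (N + 1)) ℂ
  den : ι → ι → MvPolynomial (Fin (N + 1)) ℂ
  deg : ι → ι → ℕ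
  num_hom : ∀ i j, num i j ∈ homogeneousSubmodule (Fin (N + 1)) ℂ (deg i j)
  den_hom : ∀ i j, den i j ∈ homogeneousSubmodule (Fin (N + 1)) ℂ (deg i j)
  invertible : ∀ i j, ∀ v ∈ cone X, v ∉ Z i → v ∉ Z j →
    eval v (num i j) ≠ 0 ∧ eval v (den i j) ≠ 0
  cocycle : ∀ i j k, ∀ v ∈ cone X, v ∉ Z i → v ∉ Z j → v ∉ Z k →
    eval v (num i j) * eval v (num j k) * eval v (den i k) =
      eval v (num i k) * eval v (den i j) * eval v (den j k)

/-- The line bundle `L` is isomorphic to the `k`-th tensor power of `G`: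
on the common refinement of the two coverings, the transition functions of
`L` and the `k`-th power of those of `G` differ by a coboundary of invertible
degree-zero rational functions. -/
def PicPowerIso {N : ℕ} {X : Set (Proj N)} (L G : LineBundleData N X) (k : ℤ) : Prop :=
  ∃ a : L.ι × G.ι → MvPolynomial (Fin (N + 1)) ℂ,
  ∃ b : L.ι × G.ι → MvPolynomial (Fin (N + 1)) ℂ,
  ∃ d : L.ι × G.ι → ℕ,
    (∀ r, a r ∈ homogeneousSubmodule (Fin (N + 1)) ℂ (d r)) ∧
    (∀ r, b r ∈ homogeneousSubmodule (Fin (N + 1)) ℂ (d r)) ∧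
    (∀ i p, ∀ v ∈ cone X, v ∉ L.Z i → v ∉ G.Z p →
      eval v (a (i, p)) ≠ 0 ∧ eval v (b (i, p)) ≠ 0) ∧
    (∀ i j p q, ∀ v ∈ cone X, v ∉ L.Z i → v ∉ L.Z j → v ∉ G.Z p → v ∉ G.Z q →
      eval v (L.num i j) * eval v (b (i, p)) * eval v (a (j, q)) *
          eval v (G.den p q) ^ k.toNat * eval v (G.num p q) ^ (-k).toNat =
        eval v (L.den i j) * eval v (a (i, p)) * eval v (b (j, q)) *
          eval v (G.num p q) ^ k.toNat * eval v (G.den p q) ^ (-k).toNat)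

/-- The Picard group of `X` is cyclic: there is a line bundle of which every
line bundle is a tensor power, up to isomorphism. -/
def PicCyclic {N : ℕ} (X : Set (Proj N)) : Prop :=
  ∃ G : LineBundleData N X, ∀ L : LineBundleData N X, ∃ k : ℤ, PicPowerIso L G k

/-- `X` can be isomorphically projected into `ℙ^M`: there is a linear
projection which is injective on the points of `X` and on its embedded
tangent spaces. -/
def IsoProjectableTo {N : ℕ} (X : Set (Proj N)) (M : ℕ) : Prop :=
  ∃ π : (Aff N) →ₗ[ℂ] (Aff M),
    (∀ v ∈ cone X, v ≠ 0 → π v ≠ 0) ∧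
    (∀ v ∈ cone X, ∀ w ∈ cone X, v ≠ 0 → w ≠ 0 →
      Submodule.span ℂ {π v} = Submodule.span ℂ {π w} →
      Submodule.span ℂ {v} = Submodule.span ℂ {w}) ∧
    (∀ x ∈ X, projTangent X x ⊓ LinearMap.ker π = ⊥)

end

noncomputable section
namespace SecAux
open MvPolynomial

variable {N : ℕ}

lemma zClosed_zeroLocus (S : Set (MvPolynomial (Fin (N+1)) ℂ)) :
    zClosed {x : Aff N | ∀ p ∈ S, eval x p = 0} := ⟨S, rfl⟩

lemma subset_zClosure (V : Set (Aff N)) : V ⊆ zClosure V := by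
  intro v hv
  exact Set.mem_sInter.2 fun C hC => hC.2 hv

lemma zClosure_subset {V C : Set (Aff N)} (hC : zClosed C) (hVC : V ⊆ C) :
    zClosure V ⊆ C := fun v hv => (Set.mem_sInter.1 hv) C ⟨hC, hVC⟩

lemma zClosure_mono {V V' : Set (Aff N)} (h : V ⊆ V') : zClosure V ⊆ zClosure V' :=
  fun v hv => Set.mem_sInter.2 fun C hC => (Set.mem_sInter.1 hv) C ⟨hC.1, h.trans hC.2⟩

lemma mem_zClosure_iff {V : Set (Aff N)} {u : Aff N} :
    u ∈ zClosure V ↔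
      ∀ p : MvPolynomial (Fin (N+1)) ℂ, (∀ v ∈ V, eval v p = 0) → eval u p = 0 := by
  constructor
  · intro hu p hp
    have h1 : zClosed {x : Aff N | ∀ q ∈ ({p} : Set (MvPolynomial (Fin (N+1)) ℂ)),
        eval x q = 0} := zClosed_zeroLocus _
    have h2 : V ⊆ {x : Aff N | ∀ q ∈ ({p} : Set (MvPolynomial (Fin (N+1)) ℂ)),
        eval x q = 0} := by
      intro v hv q hq
      rw [Set.mem_singleton_iff] at hq
      subst hq; exact hp v hv
    have := (Set.mem_sInter.1 hu) _ ⟨h1, h2⟩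
    simpa using this
  · intro hu
    refine Set.mem_sInter.2 ?_
    rintro C ⟨⟨S, rfl⟩, hVC⟩
    intro p hp
    exact hu p fun v hv => hVC hv p hp

lemma zClosure_eq (V : Set (Aff N)) :
    zClosure V = {x : Aff N | ∀ p ∈ {p : MvPolynomial (Fin (N+1)) ℂ | ∀ v ∈ V, eval v p = 0},
      eval x p = 0} := by
  ext u
  simp only [Set.mem_setOf_eq]
  exact mem_zClosure_iff

lemma zClosed_zClosure (V : Set (Aff N)) : zClosed (zClosure V) := by
  rw [zClosure_eq]; exact zClosed_zeroLocus _

/-- substitution: evaluating a composite polynomial -/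
lemma eval_aeval (g : Fin (N+1) → MvPolynomial (Fin (N+1)) ℂ) (x : Aff N)
    (p : MvPolynomial (Fin (N+1)) ℂ) :
    eval x (aeval g p) = eval (fun i => eval x (g i)) p := by
  induction p using MvPolynomial.induction_on with
  | C r => simp
  | add p q hp hq => rw [map_add, map_add, map_add, hp, hq]
  | mul_X p i hp => rw [map_mul, map_mul, map_mul, hp, aeval_X, eval_X]

lemma eval_shift (c x : Aff N) (p : MvPolynomial (Fin (N+1)) ℂ) :
    eval x (aeval (fun i => MvPolynomial.X i + MvPolynomial.C (c i)) p) = eval (x + c) p := by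
  rw [eval_aeval]
  have h : (fun i => eval x (MvPolynomial.X i + MvPolynomial.C (c i))) = x + c := by
    funext i; simp
  rw [h]

lemma eval_scale (a : ℂ) (x : Aff N) (p : MvPolynomial (Fin (N+1)) ℂ) :
    eval x (aeval (fun i => MvPolynomial.C a * MvPolynomial.X i) p) = eval (a • x) p := by
  rw [eval_aeval]
  have h : (fun i => eval x (MvPolynomial.C a * MvPolynomial.X i)) = a • x := by
    funext i; simp
  rw [h]

/-- translate of a closed set is closed -/
lemma zClosed_translate {C : Set (Aff N)} (hC : zClosed C) (e : Aff N) :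
    zClosed {x : Aff N | x + e ∈ C} := by
  obtain ⟨S, rfl⟩ := hC
  refine ⟨(fun p => aeval (fun i => MvPolynomial.X i + MvPolynomial.C (e i)) p) '' S, ?_⟩
  ext x
  simp only [Set.mem_setOf_eq, Set.mem_image]
  constructor
  · rintro h q ⟨p, hp, rfl⟩
    rw [eval_shift]; exact h p hp
  · intro h p hp
    have := h _ ⟨p, hp, rfl⟩
    rwa [eval_shift] at this

/-- scaling preimage of a closed set is closed -/
lemma zClosed_scale {C : Set (Aff N)} (hC : zClosed C) (a : ℂ) :
    zClosed {x : Aff N | a • x ∈ C} := by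
  obtain ⟨S, rfl⟩ := hC
  refine ⟨(fun p => aeval (fun i => MvPolynomial.C a * MvPolynomial.X i) p) '' S, ?_⟩
  ext x
  simp only [Set.mem_setOf_eq, Set.mem_image]
  constructor
  · rintro h q ⟨p, hp, rfl⟩
    rw [eval_scale]; exact h p hp
  · intro h p hp
    have := h _ ⟨p, hp, rfl⟩
    rwa [eval_scale] at this

/-- binary intersection-indexed: arbitrary bInter of closed sets over a set of translates -/
lemma zClosed_biInter {ι : Type} (E : Set ι) (f : ι → Set (Aff N))
    (hf : ∀ e ∈ E, zClosed (f e)) : zClosed (⋂ e ∈ E, f e) := by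
  classical
  choose S hS using hf
  refine ⟨⋃ (e : ι) (he : e ∈ E), S e he, ?_⟩
  ext x
  simp only [Set.mem_iInter, Set.mem_setOf_eq, Set.mem_iUnion]
  constructor
  · rintro h p ⟨e, he, hp⟩
    have := h e he
    rw [hS e he] at this
    exact this p hp
  · intro h e he
    rw [hS e he]
    intro p hp
    exact h p ⟨e, he, hp⟩

end SecAux
end
noncomputable section
namespace SecAux
open MvPolynomial

variable {N : ℕ}

/-- pullback of a polynomial along a parametrized line -/
def linePoly (a d : Aff N) (p : MvPolynomial (Fin (N+1)) ℂ) : Polynomial ℂ :=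
  aeval (fun i => Polynomial.C (a i) + Polynomial.X * Polynomial.C (d i)) p

lemma eval_linePoly (a d : Aff N) (t : ℂ) (p : MvPolynomial (Fin (N+1)) ℂ) :
    Polynomial.eval t (linePoly a d p) = eval (a + t • d) p := by
  unfold linePoly
  induction p using MvPolynomial.induction_on with
  | C r => simp [Polynomial.eval_C]
  | add p q hp hq => rw [map_add, Polynomial.eval_add, hp, hq, map_add]
  | mul_X p i hp =>
      rw [map_mul, Polynomial.eval_mul, hp, aeval_X, map_mul, eval_X]
      simp only [Polynomial.eval_add, Polynomial.eval_mul, Polynomial.eval_C,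
        Polynomial.eval_X, Pi.add_apply, Pi.smul_apply, smul_eq_mul]

lemma finite_line_inter {C : Set (Aff N)} (hC : zClosed C) (a d : Aff N) (t0 : ℂ)
    (h0 : a + t0 • d ∉ C) : {t : ℂ | a + t • d ∈ C}.Finite := by
  obtain ⟨S, rfl⟩ := hC
  simp only [Set.mem_setOf_eq, not_forall] at h0
  obtain ⟨p, hpS, hp0⟩ := h0
  have hq : linePoly a d p ≠ 0 := by
    intro h
    apply hp0
    rw [← eval_linePoly a d t0 p, h, Polynomial.eval_zero]
  refine (Polynomial.finite_setOf_isRoot hq).subset ?_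
  intro t ht
  simp only [Set.mem_setOf_eq, Polynomial.IsRoot, eval_linePoly]
  exact ht p hpS

lemma zClosed_empty : zClosed (∅ : Set (Aff N)) := by
  refine ⟨{1}, ?_⟩
  ext x
  simp

lemma zClosed_union {C D : Set (Aff N)} (hC : zClosed C) (hD : zClosed D) :
    zClosed (C ∪ D) := by
  obtain ⟨S, rfl⟩ := hC
  obtain ⟨T, rfl⟩ := hD
  refine ⟨{r | ∃ p ∈ S, ∃ q ∈ T, r = p * q}, ?_⟩
  ext x
  simp only [Set.mem_union, Set.mem_setOf_eq]
  constructor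
  · rintro (h | h) r ⟨p, hp, q, hq, rfl⟩
    · rw [map_mul, h p hp, zero_mul]
    · rw [map_mul, h q hq, mul_zero]
  · intro h
    by_cases hS : ∀ p ∈ S, eval x p = 0
    · exact Or.inl hS
    · right
      push_neg at hS
      obtain ⟨p, hp, hpx⟩ := hS
      intro q hq
      have := h (p * q) ⟨p, hp, q, hq, rfl⟩
      rw [map_mul] at this
      exact (mul_eq_zero.1 this).resolve_left hpx

lemma zClosed_singleton (a : Aff N) : zClosed ({a} : Set (Aff N)) := by
  refine ⟨Set.range (fun i => MvPolynomial.X i - MvPolynomial.C (a i)), ?_⟩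
  ext x
  simp only [Set.mem_singleton_iff, Set.mem_setOf_eq, Set.forall_mem_range, map_sub, eval_X,
    eval_C, sub_eq_zero]
  constructor
  · rintro rfl i; rfl
  · intro h; funext i; exact h i

lemma zClosed_finite {C : Set (Aff N)} (hC : C.Finite) : zClosed C := by
  refine Set.Finite.induction_on (motive := fun s _ => zClosed s) C hC zClosed_empty ?_
  intro a s _ _ ih
  rw [Set.insert_eq]
  exact zClosed_union (zClosed_singleton _) ih

/-- the supporting dual functional -/
lemma exists_dual_separating (L : Submodule ℂ (Aff N)) {x : Aff N} (hx : x ∉ L) :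
    ∃ f : Module.Dual ℂ (Aff N), (∀ y ∈ L, f y = 0) ∧ f x ≠ 0 := by
  classical
  set v := L.mkQ x with hv
  have hv0 : v ≠ 0 := by
    simpa [hv, Submodule.mkQ_apply, Submodule.Quotient.mk_eq_zero] using hx
  have : Nontrivial (Aff N ⧸ L) := ⟨v, 0, hv0⟩
  obtain ⟨g, hg⟩ : ∃ g : Module.Dual ℂ (Aff N ⧸ L), g v ≠ 0 := by
    have hrepr : (Module.finBasis ℂ (Aff N ⧸ L)).repr v ≠ 0 := by
      intro h
      exact hv0 ((Module.finBasis ℂ (Aff N ⧸ L)).repr.map_eq_zero_iff.1 h)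
    obtain ⟨i, hi⟩ := Finsupp.ne_iff.1 hrepr
    exact ⟨(Module.finBasis ℂ (Aff N ⧸ L)).coord i, by simpa using hi⟩
  refine ⟨g.comp L.mkQ, fun y hy => ?_, hg⟩
  simp [Submodule.mkQ_apply, (Submodule.Quotient.mk_eq_zero L).2 hy]

/-- a linear functional as a polynomial -/
def dualPoly (f : Module.Dual ℂ (Aff N)) : MvPolynomial (Fin (N+1)) ℂ :=
  ∑ i, MvPolynomial.C (f (Pi.single i 1)) * MvPolynomial.X i

lemma eval_dualPoly (f : Module.Dual ℂ (Aff N)) (x : Aff N) :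
    eval x (dualPoly f) = f x := by
  have hx : x = ∑ i, (x i) • (Pi.single i (1:ℂ) : Aff N) := by
    funext j
    rw [Finset.sum_apply]
    simp [Pi.single_apply, Finset.sum_ite_eq']
  rw [dualPoly, map_sum]
  conv_rhs => rw [hx]
  rw [map_sum]
  congr 1
  funext i
  simp [mul_comm]

lemma zClosed_submodule (L : Submodule ℂ (Aff N)) : zClosed (L : Set (Aff N)) := by
  refine ⟨dualPoly '' {f : Module.Dual ℂ (Aff N) | ∀ y ∈ L, f y = 0}, ?_⟩
  ext x
  simp only [SetLike.mem_coe, Set.mem_setOf_eq]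
  constructor
  · rintro hx q ⟨f, hf, rfl⟩
    rw [eval_dualPoly]
    exact hf x hx
  · intro h
    by_contra hx
    obtain ⟨f, hf, hfx⟩ := exists_dual_separating L hx
    exact hfx (by rw [← eval_dualPoly f x]; exact h _ ⟨f, hf, rfl⟩)

lemma zIrred_submodule (L : Submodule ℂ (Aff N)) : zIrred (L : Set (Aff N)) := by
  refine ⟨⟨0, L.zero_mem⟩, ?_⟩
  intro C1 C2 h1 h2 hsub
  by_contra h
  push_neg at h
  obtain ⟨hn1, hn2⟩ := h
  obtain ⟨a, haL, haC⟩ := Set.not_subset.1 hn1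
  obtain ⟨b, hbL, hbC⟩ := Set.not_subset.1 hn2
  set d := b - a with hd
  have hline : ∀ t : ℂ, a + t • d ∈ (L : Set (Aff N)) := fun t =>
    L.add_mem haL (L.smul_mem t (L.sub_mem hbL haL))
  have hT1 : {t : ℂ | a + t • d ∈ C1}.Finite := by
    refine finite_line_inter h1 a d 0 ?_
    simpa using haC
  have hT2 : {t : ℂ | a + t • d ∈ C2}.Finite := by
    refine finite_line_inter h2 a d 1 ?_
    simpa [hd] using hbC
  have huniv : ({t : ℂ | a + t • d ∈ C1} ∪ {t : ℂ | a + t • d ∈ C2}) = Set.univ := by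
    ext t
    simp only [Set.mem_union, Set.mem_setOf_eq, Set.mem_univ, iff_true]
    exact hsub (hline t)
  have : (Set.univ : Set ℂ).Finite := huniv ▸ hT1.union hT2
  exact Set.infinite_univ this

lemma zIrred_zClosure {V : Set (Aff N)} (h : zIrred V) : zIrred (zClosure V) := by
  obtain ⟨⟨v, hv⟩, hirr⟩ := h
  refine ⟨⟨v, subset_zClosure V hv⟩, ?_⟩
  intro C1 C2 h1 h2 hsub
  rcases hirr C1 C2 h1 h2 ((subset_zClosure V).trans hsub) with h | h
  · exact Or.inl (zClosure_subset h1 h)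
  · exact Or.inr (zClosure_subset h2 h)

/-- sum of two sets -/
def sumSet (A B : Set (Aff N)) : Set (Aff N) := {x | ∃ a ∈ A, ∃ b ∈ B, x = a + b}

lemma zIrred_sumSet {A B : Set (Aff N)} (hA : zIrred A) (hB : zIrred B) :
    zIrred (sumSet A B) := by
  obtain ⟨⟨a0, ha0⟩, hAirr⟩ := hA
  obtain ⟨⟨b0, hb0⟩, hBirr⟩ := hB
  refine ⟨⟨a0 + b0, ⟨a0, ha0, b0, hb0, rfl⟩⟩, ?_⟩
  intro C1 C2 h1 h2 hsub
  have key : ∀ a ∈ A, (∀ b ∈ B, a + b ∈ C1) ∨ (∀ b ∈ B, a + b ∈ C2) := by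
    intro a ha
    have hBsub : B ⊆ {y | y + a ∈ C1} ∪ {y | y + a ∈ C2} := by
      intro b hb
      have : a + b ∈ C1 ∪ C2 := hsub ⟨a, ha, b, hb, rfl⟩
      rcases this with h | h
      · exact Or.inl (by simpa [add_comm] using h)
      · exact Or.inr (by simpa [add_comm] using h)
    rcases hBirr _ _ (zClosed_translate h1 a) (zClosed_translate h2 a) hBsub with h | h
    · exact Or.inl fun b hb => by simpa [add_comm] using h hb
    · exact Or.inr fun b hb => by simpa [add_comm] using h hb
  set K1 : Set (Aff N) := ⋂ b ∈ B, {x | x + b ∈ C1} with hK1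
  set K2 : Set (Aff N) := ⋂ b ∈ B, {x | x + b ∈ C2} with hK2
  have hAsub : A ⊆ K1 ∪ K2 := by
    intro a ha
    rcases key a ha with h | h
    · exact Or.inl (Set.mem_iInter₂.2 fun b hb => h b hb)
    · exact Or.inr (Set.mem_iInter₂.2 fun b hb => h b hb)
  have hK1c : zClosed K1 := zClosed_biInter B _ (fun b _ => zClosed_translate h1 b)
  have hK2c : zClosed K2 := zClosed_biInter B _ (fun b _ => zClosed_translate h2 b)
  rcases hAirr _ _ hK1c hK2c hAsub with h | h
  · refine Or.inl ?_
    rintro x ⟨a, ha, b, hb, rfl⟩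
    exact Set.mem_iInter₂.1 (h ha) b hb
  · refine Or.inr ?_
    rintro x ⟨a, ha, b, hb, rfl⟩
    exact Set.mem_iInter₂.1 (h ha) b hb

lemma smul_mem_zClosure {V : Set (Aff N)}
    (hV : ∀ v ∈ V, ∀ c : ℂ, c ≠ 0 → c • v ∈ V) {u : Aff N}
    (hu : u ∈ zClosure V) {c : ℂ} (hc : c ≠ 0) : c • u ∈ zClosure V := by
  refine Set.mem_sInter.2 ?_
  rintro C ⟨hCc, hVC⟩
  have hD : zClosed {x : Aff N | c • x ∈ C} := zClosed_scale hCc c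
  have hVD : V ⊆ {x : Aff N | c • x ∈ C} := fun v hv => hVC (hV v hv c hc)
  exact Set.mem_sInter.1 hu _ ⟨hD, hVD⟩

lemma length_le_adim {V : Set (Aff N)} {m : ℕ}
    (f : Fin (m+1) → {W : Set (Aff N) // zClosed W ∧ zIrred W ∧ W ⊆ V})
    (hf : ∀ i : Fin m, f i.castSucc < f i.succ) : (m : WithBot ℕ∞) ≤ adim V :=
  Order.LTSeries.length_le_krullDim (⟨m, f, hf⟩ : LTSeries _)

end SecAux
end
noncomputable section
namespace SecAux
open MvPolynomial

variable {N : ℕ}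

lemma exists_flag (M : Submodule ℂ (Aff N)) (m : ℕ) (hm : Module.finrank ℂ M = m) :
    ∃ f : Fin (m+1) → Submodule ℂ (Aff N),
      (∀ i : Fin m, f i.castSucc < f i.succ) ∧ f 0 = ⊥ ∧ f (Fin.last m) = M ∧
        ∀ i, f i ≤ M := by
  classical
  let b : Module.Basis (Fin m) ℂ M := Module.finBasisOfFinrankEq ℂ M hm
  refine ⟨fun k => Submodule.map M.subtype
      (Submodule.span ℂ (b '' {j : Fin m | (j : ℕ) < (k : ℕ)})), ?_, ?_, ?_, ?_⟩
  · intro i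
    have hle : Submodule.span ℂ (b '' {j : Fin m | (j:ℕ) < ((i.castSucc : Fin (m+1)) : ℕ)}) ≤
        Submodule.span ℂ (b '' {j : Fin m | (j:ℕ) < ((i.succ : Fin (m+1)) : ℕ)}) := by
      apply Submodule.span_mono
      apply Set.image_mono
      intro j hj
      simp only [Set.mem_setOf_eq, Fin.coe_castSucc, Fin.val_succ] at *
      omega
    refine lt_of_le_of_ne (Submodule.map_mono hle) ?_
    intro heq
    dsimp only at heq
    have hmem : (b i : Aff N) ∈ Submodule.map M.subtype
        (Submodule.span ℂ (b '' {j : Fin m | (j:ℕ) < ((i.succ : Fin (m+1)) : ℕ)})) := by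
      refine ⟨b i, Submodule.subset_span ⟨i, ?_, rfl⟩, rfl⟩
      simp [Fin.val_succ]
    rw [← heq] at hmem
    obtain ⟨y, hy, hyx⟩ := hmem
    have hyb : y = b i := Subtype.ext hyx
    subst hyb
    have hni : i ∉ {j : Fin m | (j:ℕ) < ((i.castSucc : Fin (m+1)) : ℕ)} := by
      simp [Fin.coe_castSucc]
    exact b.linearIndependent.notMem_span_image hni hy
  · have he : {j : Fin m | (j:ℕ) < ((0 : Fin (m+1)) : ℕ)} = ∅ := by
      ext j; simp
    dsimp only
    rw [he]
    simp
  · have he : {j : Fin m | (j:ℕ) < ((Fin.last m : Fin (m+1)) : ℕ)} = Set.univ := by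
      ext j; simp [Fin.val_last, j.isLt]
    dsimp only
    rw [he, Set.image_univ, b.span_eq]
    exact Submodule.map_subtype_top M
  · intro i
    exact Submodule.map_subtype_le M _

lemma exists_three_of_two_le {α : Type*} [Preorder α]
    (h : ((2:ℕ) : WithBot ℕ∞) ≤ Order.krullDim α) :
    ∃ a b c : α, a < b ∧ b < c := by
  by_contra hno
  push_neg at hno
  have hlen : ∀ p : LTSeries α, p.length ≤ 1 := by
    intro p
    by_contra hp
    push_neg at hp
    have h2 : 2 ≤ p.length := hp
    have h0 : p.toFun ⟨0, by omega⟩ < p.toFun ⟨1, by omega⟩ :=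
      p.strictMono (by simp [Fin.lt_def])
    have h1 : p.toFun ⟨1, by omega⟩ < p.toFun ⟨2, by omega⟩ :=
      p.strictMono (by simp [Fin.lt_def])
    exact hno _ _ _ h0 h1
  have hkd : Order.krullDim α ≤ ((1:ℕ) : WithBot ℕ∞) := by
    unfold Order.krullDim
    refine iSup_le fun p => ?_
    exact_mod_cast hlen p
  have : (2:ℕ) ≤ (1:ℕ) := by exact_mod_cast h.trans hkd
  omega

end SecAux
end
open SecAux in
/-- A non-degenerate scroll over a smooth curve with positive secant defect
(`δ(X) = 2n + 1 - dim SX > 0`, i.e. `adim (cone SX) < 2n + 2`) has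
`SX = ℙ^N`. -/
theorem secant_full_of_curve_scroll_defective {N n : ℕ} (X : Set (Proj N))
    (hX : SmoothVariety X n) (hnd : Nondeg X) (S : ScrollOn N X n 1)
    (hdef : adim (cone (secantVar X)) < ((2 * n + 2 : ℕ) : WithBot ℕ∞)) :
    secantVar X = Set.univ := by
  classical
  obtain ⟨hXcl, hXirr, hXdim, _⟩ := hX
  have hn : n = 1 + S.fdim := S.dim_eq
  have hn1 : 1 ≤ n := by omega
  set raw : Set (Proj N) := {z | ∃ y ∈ X, ∃ x ∈ X, y ≠ x ∧ z ∈ pline y x} with hraw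
  have hsecant : secantVar X = {z : Proj N | z.rep ∈ zClosure (cone raw)} := rfl
  have hfinish : zClosure (cone raw) = Set.univ → secantVar X = Set.univ := by
    intro h
    rw [hsecant, h]
    ext z; simp
  have h0C : (0 : Aff N) ∈ cone X := Or.inr rfl
  have h0R : (0 : Aff N) ∈ cone raw := Or.inr rfl
  have hmkC : ∀ (Y : Set (Proj N)) (v : Aff N) (hv : v ≠ 0), v ∈ cone Y →
      Projectivization.mk ℂ v hv ∈ Y := by
    rintro Y v hv (⟨hv', hm⟩ | hz)
    · exact hm
    · exact absurd (Set.eq_of_mem_singleton hz) hv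
  have hCmk : ∀ (Y : Set (Proj N)) (v : Aff N) (hv : v ≠ 0),
      Projectivization.mk ℂ v hv ∈ Y → v ∈ cone Y :=
    fun Y v hv h => Or.inl ⟨hv, h⟩
  have hconescal : ∀ (Y : Set (Proj N)) (v : Aff N), v ∈ cone Y → ∀ c : ℂ, c ≠ 0 →
      c • v ∈ cone Y := by
    rintro Y v (⟨hv, hm⟩ | hz) c hc
    · have hcv : c • v ≠ 0 := smul_ne_zero hc hv
      refine Or.inl ⟨hcv, ?_⟩
      have heq : Projectivization.mk ℂ (c • v) hcv = Projectivization.mk ℂ v hv :=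
        (Projectivization.mk_eq_mk_iff' ℂ _ _ hcv hv).2 ⟨c, rfl⟩
      rw [heq]; exact hm
    · rw [Set.eq_of_mem_singleton hz, smul_zero]; exact Or.inr rfl
  have hFC : ∀ w ∈ S.W, ((S.Fsub w : Submodule ℂ (Aff N)) : Set (Aff N)) ⊆ cone X := by
    intro w hw f hf
    rcases eq_or_ne f 0 with rfl | hf0
    · exact h0C
    · refine Or.inl ⟨hf0, ?_⟩
      rw [S.cover]
      refine Set.mem_iUnion₂.2 ⟨w, hw, ?_⟩
      show (Projectivization.mk ℂ f hf0).submodule ≤ S.Fsub w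
      rw [Projectivization.submodule_mk]
      exact (Submodule.span_singleton_le_iff_mem f _).2 hf
  have hCcover : ∀ v ∈ cone X, v ≠ 0 → ∃ w ∈ S.W, v ∈ S.Fsub w := by
    intro v hvC hv
    have hm := hmkC X v hv hvC
    rw [S.cover] at hm
    obtain ⟨w, hw, hle⟩ := Set.mem_iUnion₂.1 hm
    refine ⟨w, hw, ?_⟩
    have hle' : (Projectivization.mk ℂ v hv).submodule ≤ S.Fsub w := hle
    rw [Projectivization.submodule_mk] at hle'
    exact hle' (Submodule.mem_span_singleton_self v)
  have hCscal : ∀ v ∈ cone X, ∀ c : ℂ, c ≠ 0 → c • v ∈ cone X := fun v hv c hc =>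
    hconescal X v hv c hc
  by_cases hW2 : ∃ w ∈ S.W, ∃ w' ∈ S.W, w ≠ w'
  · -- main case: two distinct fibres
    obtain ⟨w1, hw1, w2, hw2, hww⟩ := hW2
    have hFrank : ∀ w ∈ S.W, Module.finrank ℂ (S.Fsub w) = n := by
      intro w hw; have := S.fib_rank w hw; omega
    have hpairbot : ∀ wa ∈ S.W, ∀ wb ∈ S.W, wa ≠ wb → S.Fsub wa ⊓ S.Fsub wb = ⊥ := by
      intro wa hwa wb hwb hab
      rw [eq_bot_iff]
      intro v hv
      rcases eq_or_ne v 0 with rfl | hv0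
      · exact Submodule.zero_mem ⊥
      · exfalso
        refine S.disjoint wa hwa wb hwb hab (Projectivization.mk ℂ v hv0) ?_ ?_
        · rw [Projectivization.submodule_mk]
          exact (Submodule.span_singleton_le_iff_mem _ _).2 (Submodule.mem_inf.1 hv).1
        · rw [Projectivization.submodule_mk]
          exact (Submodule.span_singleton_le_iff_mem _ _).2 (Submodule.mem_inf.1 hv).2
    have hpairrank : ∀ wa ∈ S.W, ∀ wb ∈ S.W, wa ≠ wb →
        Module.finrank ℂ ((S.Fsub wa ⊔ S.Fsub wb : Submodule ℂ (Aff N))) = 2*n := by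
      intro wa hwa wb hwb hab
      have h := Submodule.finrank_sup_add_finrank_inf_eq (S.Fsub wa) (S.Fsub wb)
      rw [hpairbot wa hwa wb hwb hab] at h
      rw [finrank_bot] at h
      have h1 := hFrank wa hwa
      have h2 := hFrank wb hwb
      omega
    have hFnzero : ∀ w ∈ S.W, ∃ f ∈ S.Fsub w, f ≠ (0 : Aff N) := by
      intro w hw
      refine (Submodule.ne_bot_iff _).1 ?_
      intro h
      have := hFrank w hw
      rw [h, finrank_bot] at this
      omega
    obtain ⟨f1, hf1F, hf10⟩ := hFnzero w1 hw1
    obtain ⟨f2, hf2F, hf20⟩ := hFnzero w2 hw2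
    have hmk12 : Projectivization.mk ℂ f1 hf10 ≠ Projectivization.mk ℂ f2 hf20 := by
      intro h
      refine S.disjoint w1 hw1 w2 hw2 hww (Projectivization.mk ℂ f1 hf10) ?_ ?_
      · rw [Projectivization.submodule_mk]
        exact (Submodule.span_singleton_le_iff_mem _ _).2 hf1F
      · rw [h, Projectivization.submodule_mk]
        exact (Submodule.span_singleton_le_iff_mem _ _).2 hf2F
    have hXf1 : Projectivization.mk ℂ f1 hf10 ∈ X := hmkC X _ _ (hFC w1 hw1 hf1F)
    have hXf2 : Projectivization.mk ℂ f2 hf20 ∈ X := hmkC X _ _ (hFC w2 hw2 hf2F)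
    have hCsubR : cone X ⊆ cone raw := by
      intro v hvC
      rcases eq_or_ne v 0 with rfl | hv
      · exact h0R
      · refine Or.inl ⟨hv, ?_⟩
        rcases eq_or_ne (Projectivization.mk ℂ v hv) (Projectivization.mk ℂ f1 hf10) with h | h
        · refine ⟨_, hmkC X v hv hvC, _, hXf2, ?_, ?_⟩
          · rw [h]; exact hmk12
          · show (Projectivization.mk ℂ v hv).submodule ≤ _
            exact le_sup_left
        · refine ⟨_, hmkC X v hv hvC, _, hXf1, h, ?_⟩
          show (Projectivization.mk ℂ v hv).submodule ≤ _
          exact le_sup_left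
    have hrepC : ∀ z : Proj N, z ∈ X → z.rep ∈ cone X := by
      intro z hz
      refine Or.inl ⟨z.rep_nonzero, ?_⟩
      rw [Projectivization.mk_rep]
      exact hz
    have hRsubCC : cone raw ⊆ sumSet (cone X) (cone X) := by
      rintro v (⟨hv, y, hyX, x, hxX, hyx, hpl⟩ | hz)
      · have hv' : v ∈ y.submodule ⊔ x.submodule := by
          apply hpl
          rw [Projectivization.submodule_mk]
          exact Submodule.mem_span_singleton_self v
        rw [Projectivization.submodule_eq y, Projectivization.submodule_eq x] at hv'
        have hv2 : v ∈ Submodule.span ℂ {y.rep, x.rep} := by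
          rwa [Submodule.span_insert]
        obtain ⟨α, β, hab⟩ := Submodule.mem_span_pair.1 hv2
        have hmem : ∀ (γ : ℂ) (z : Proj N), z ∈ X → γ • z.rep ∈ cone X := by
          intro γ z hz
          rcases eq_or_ne γ 0 with rfl | hγ
          · rw [zero_smul]; exact h0C
          · exact hCscal _ (hrepC z hz) γ hγ
        exact ⟨α • y.rep, hmem α y hyX, β • x.rep, hmem β x hxX, hab.symm⟩
      · rw [Set.eq_of_mem_singleton hz]
        exact ⟨0, h0C, 0, h0C, (add_zero 0).symm⟩
    have hCCsubR : sumSet (cone X) (cone X) ⊆ cone raw := by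
      rintro x ⟨va, hva, vb, hvb, rfl⟩
      rcases eq_or_ne va 0 with rfl | ha0
      · rw [zero_add]; exact hCsubR hvb
      rcases eq_or_ne vb 0 with rfl | hb0
      · rw [add_zero]; exact hCsubR hva
      rcases eq_or_ne (Projectivization.mk ℂ va ha0) (Projectivization.mk ℂ vb hb0) with h | h
      · have h1 : vb ∈ (Projectivization.mk ℂ vb hb0).submodule := by
          rw [Projectivization.submodule_mk]
          exact Submodule.mem_span_singleton_self vb
        rw [← h, Projectivization.submodule_mk] at h1
        obtain ⟨c, hc⟩ := Submodule.mem_span_singleton.1 h1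
        have hsum : va + vb = (1 + c) • va := by rw [add_smul, one_smul, hc]
        rcases eq_or_ne (1 + c) 0 with h1c | h1c
        · rw [hsum, h1c, zero_smul]; exact h0R
        · rw [hsum]; exact hCsubR (hCscal va hva _ h1c)
      · rcases eq_or_ne (va + vb) 0 with hs | hs
        · rw [hs]; exact h0R
        · refine Or.inl ⟨hs, ⟨_, hmkC X va ha0 hva, _, hmkC X vb hb0 hvb, h, ?_⟩⟩
          show (Projectivization.mk ℂ (va + vb) hs).submodule ≤ _
          rw [Projectivization.submodule_mk, Projectivization.submodule_mk,
            Projectivization.submodule_mk]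
          refine (Submodule.span_singleton_le_iff_mem _ _).2 ?_
          exact Submodule.add_mem _
            (Submodule.mem_sup_left (Submodule.mem_span_singleton_self va))
            (Submodule.mem_sup_right (Submodule.mem_span_singleton_self vb))
    have hReq : cone raw = sumSet (cone X) (cone X) := Set.Subset.antisymm hRsubCC hCCsubR
    have hRsubS : cone raw ⊆ zClosure (cone raw) := subset_zClosure _
    have hScl : zClosed (zClosure (cone raw)) := zClosed_zClosure _
    have hCirr : zIrred (cone X) := hXirr
    have hSirr : zIrred (zClosure (cone raw)) := by
      rw [hReq]
      exact zIrred_zClosure (zIrred_sumSet hCirr hCirr)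
    have hSsub : zClosure (cone raw) ⊆ cone (secantVar X) := by
      intro v hvS
      rcases eq_or_ne v 0 with rfl | hv
      · exact Or.inr rfl
      · refine Or.inl ⟨hv, ?_⟩
        show (Projectivization.mk ℂ v hv).rep ∈ zClosure (cone raw)
        obtain ⟨a, ha⟩ := Projectivization.exists_smul_eq_mk_rep ℂ v hv
        rw [← ha]
        have : ((a : ℂ) • v) ∈ zClosure (cone raw) :=
          smul_mem_zClosure (fun x hx c hc => hconescal raw x hx c hc) hvS a.ne_zero
        exact this
    by_cases hb : ∀ w ∈ S.W, sumSet (cone X) (cone X) ⊆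
        zClosure (sumSet ((S.Fsub w : Submodule ℂ (Aff N)) : Set (Aff N)) (cone X))
    · -- everything is in the closure
      apply hfinish
      have hstep : ∀ c ∈ cone X, ∀ u ∈ zClosure (cone raw), c + u ∈ zClosure (cone raw) := by
        intro c hc u hu
        rcases eq_or_ne c 0 with rfl | hc0
        · rwa [zero_add]
        obtain ⟨w, hw, hcF⟩ := hCcover c hc hc0
        rw [mem_zClosure_iff] at hu ⊢
        intro p hp
        set φ := aeval (fun i => MvPolynomial.X i + MvPolynomial.C (c i)) p with hφdef
        have hφ : ∀ y, eval y φ = eval (y + c) p := fun y => eval_shift c y p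
        have hφvan : ∀ v ∈ sumSet ((S.Fsub w : Submodule ℂ (Aff N)) : Set (Aff N)) (cone X),
            eval v φ = 0 := by
          rintro v ⟨f, hf, c', hc', rfl⟩
          rw [hφ]
          have heq : f + c' + c = (c + f) + c' := by abel
          rw [heq]
          apply hp
          rw [hReq]
          exact ⟨c + f, hFC w hw ((S.Fsub w).add_mem hcF hf), c', hc', rfl⟩
        have hφCC : ∀ v ∈ sumSet (cone X) (cone X), eval v φ = 0 := by
          intro v hv
          exact mem_zClosure_iff.1 (hb w hw hv) φ hφvan
        have hev := hu φ (fun v hv => hφCC v (by rwa [← hReq]))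
        rw [hφ] at hev
        rwa [add_comm u c] at hev
      have hsum : ∀ l : List (Aff N), (∀ y ∈ l, y ∈ cone X) → l.sum ∈ zClosure (cone raw) := by
        intro l
        induction l with
        | nil => intro _; simpa using hRsubS h0R
        | cons a t ih =>
            intro h
            rw [List.sum_cons]
            exact hstep a (h a List.mem_cons_self) _
              (ih fun y hy => h y (List.mem_cons_of_mem a hy))
      let U : Submodule ℂ (Aff N) :=
        { carrier := {x | ∃ l : List (Aff N), (∀ y ∈ l, y ∈ cone X) ∧ l.sum = x}
          add_mem' := by
            rintro x y ⟨l1, hl1, rfl⟩ ⟨l2, hl2, rfl⟩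
            refine ⟨l1 ++ l2, ?_, List.sum_append⟩
            intro z hz
            rcases List.mem_append.1 hz with h | h
            exacts [hl1 z h, hl2 z h]
          zero_mem' := ⟨[], by simp, List.sum_nil⟩
          smul_mem' := by
            rintro c x ⟨l, hl, rfl⟩
            rcases eq_or_ne c 0 with rfl | hc
            · exact ⟨[], by simp, by simp⟩
            · refine ⟨l.map (fun y => c • y), ?_, ?_⟩
              · intro z hz
                obtain ⟨y, hy, rfl⟩ := List.mem_map.1 hz
                exact hCscal y (hl y hy) c hc
              · rw [← List.smul_sum] }
      have hCU : cone X ⊆ (U : Set (Aff N)) := by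
        intro c hc
        refine ⟨[c], ?_, by simp⟩
        intro y hy
        rw [List.mem_singleton.1 hy]
        exact hc
      have hallU : ∀ x : Aff N, x ∈ U := by
        intro x
        have hx : x ∈ Submodule.span ℂ (cone X) := by rw [hnd]; trivial
        exact Submodule.span_le.2 hCU hx
      refine Set.eq_univ_iff_forall.2 fun x => ?_
      obtain ⟨l, hl, rfl⟩ := hallU x
      exact hsum l hl
    · -- chain case: contradiction with the dimension bound
      push_neg at hb
      obtain ⟨w, hw, hnsub⟩ := hb
      obtain ⟨x1, hx1CC, hx1A⟩ := Set.not_subset.1 hnsub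
      obtain ⟨w', hw', hww'⟩ : ∃ w' ∈ S.W, w ≠ w' := by
        rcases eq_or_ne w w1 with rfl | h
        · exact ⟨w2, hw2, hww⟩
        · exact ⟨w1, hw1, h⟩
      by_cases hMtop : (S.Fsub w ⊔ S.Fsub w' : Submodule ℂ (Aff N)) = ⊤
      · apply hfinish
        refine Set.eq_univ_iff_forall.2 fun x => ?_
        apply subset_zClosure
        apply hCCsubR
        have hx : x ∈ (S.Fsub w ⊔ S.Fsub w' : Submodule ℂ (Aff N)) := by
          rw [hMtop]; trivial
        obtain ⟨va, hva, vb, hvb, hab⟩ := Submodule.mem_sup.1 hx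
        exact ⟨va, hFC w hw hva, vb, hFC w' hw' hvb, hab.symm⟩
      · exfalso
        have hMrank : Module.finrank ℂ ((S.Fsub w ⊔ S.Fsub w' : Submodule ℂ (Aff N))) = 2*n :=
          hpairrank w hw w' hw' hww'
        have hsumsubCC : sumSet ((S.Fsub w : Submodule ℂ (Aff N)) : Set (Aff N)) (cone X) ⊆
            sumSet (cone X) (cone X) := by
          rintro v ⟨f, hf, c, hc, rfl⟩
          exact ⟨f, hFC w hw hf, c, hc, rfl⟩
        have hAsubS : zClosure (sumSet ((S.Fsub w : Submodule ℂ (Aff N)) : Set (Aff N)) (cone X)) ⊆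
            zClosure (cone raw) := by
          rw [hReq]
          exact zClosure_mono hsumsubCC
        have hMset : ((S.Fsub w ⊔ S.Fsub w' : Submodule ℂ (Aff N)) : Set (Aff N)) ⊆
            sumSet ((S.Fsub w : Submodule ℂ (Aff N)) : Set (Aff N)) (cone X) := by
          intro x hx
          obtain ⟨va, hva, vb, hvb, hab⟩ := Submodule.mem_sup.1 hx
          exact ⟨va, hva, vb, hFC w' hw' hvb, hab.symm⟩
        have hMsubA : ((S.Fsub w ⊔ S.Fsub w' : Submodule ℂ (Aff N)) : Set (Aff N)) ⊆
            zClosure (sumSet ((S.Fsub w : Submodule ℂ (Aff N)) : Set (Aff N)) (cone X)) :=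
          hMset.trans (subset_zClosure _)
        obtain ⟨c0, hc0C, hc0M⟩ : ∃ c0 ∈ cone X,
            c0 ∉ ((S.Fsub w ⊔ S.Fsub w' : Submodule ℂ (Aff N)) : Set (Aff N)) := by
          by_contra hcon
          push_neg at hcon
          apply hMtop
          rw [eq_top_iff, ← hnd]
          exact Submodule.span_le.2 hcon
        have hc0A : c0 ∈ zClosure (sumSet ((S.Fsub w : Submodule ℂ (Aff N)) : Set (Aff N)) (cone X)) :=
          subset_zClosure _ ⟨0, (S.Fsub w).zero_mem, c0, hc0C, (zero_add c0).symm⟩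
        have hx1S : x1 ∈ zClosure (cone raw) := by
          rw [hReq]
          exact subset_zClosure _ hx1CC
        have hAirr : zIrred (zClosure (sumSet ((S.Fsub w : Submodule ℂ (Aff N)) : Set (Aff N)) (cone X))) :=
          zIrred_zClosure (zIrred_sumSet (zIrred_submodule _) hCirr)
        have hAcl : zClosed (zClosure (sumSet ((S.Fsub w : Submodule ℂ (Aff N)) : Set (Aff N)) (cone X))) :=
          zClosed_zClosure _
        obtain ⟨f0, hf0step, hf0bot, hf0last, hf0le⟩ := exists_flag _ (2*n) hMrank
        have hsubmem : ∀ k : Fin (2*n+1),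
            ((f0 k : Submodule ℂ (Aff N)) : Set (Aff N)) ⊆ cone (secantVar X) := by
          intro k
          refine Set.Subset.trans ?_ hSsub
          refine Set.Subset.trans ?_ hAsubS
          refine Set.Subset.trans ?_ hMsubA
          intro x hx
          exact hf0le k hx
        let elF : Fin (2*n+1) → {W : Set (Aff N) // zClosed W ∧ zIrred W ∧ W ⊆ cone (secantVar X)} :=
          fun k => ⟨((f0 k : Submodule ℂ (Aff N)) : Set (Aff N)), zClosed_submodule _,
            zIrred_submodule _, hsubmem k⟩
        let elA : {W : Set (Aff N) // zClosed W ∧ zIrred W ∧ W ⊆ cone (secantVar X)} :=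
          ⟨zClosure (sumSet ((S.Fsub w : Submodule ℂ (Aff N)) : Set (Aff N)) (cone X)),
            hAcl, hAirr, hAsubS.trans hSsub⟩
        let elS : {W : Set (Aff N) // zClosed W ∧ zIrred W ∧ W ⊆ cone (secantVar X)} :=
          ⟨zClosure (cone raw), hScl, hSirr, hSsub⟩
        let F : Fin (2*n+2+1) → {W : Set (Aff N) // zClosed W ∧ zIrred W ∧ W ⊆ cone (secantVar X)} :=
          fun i => if h : (i : ℕ) < 2*n+1 then elF ⟨(i : ℕ), h⟩
            else if (i : ℕ) = 2*n+1 then elA else elS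
        have hFval1 : ∀ (j : Fin (2*n+2+1)) (h : (j : ℕ) < 2*n+1), F j = elF ⟨(j : ℕ), h⟩ := by
          intro j h
          simp only [F, dif_pos h]
        have hFval2 : ∀ (j : Fin (2*n+2+1)), (j : ℕ) = 2*n+1 → F j = elA := by
          intro j h
          simp only [F]
          rw [dif_neg (by omega), if_pos h]
        have hFval3 : ∀ (j : Fin (2*n+2+1)), (j : ℕ) = 2*n+2 → F j = elS := by
          intro j h
          simp only [F]
          rw [dif_neg (by omega), if_neg (by omega)]
        have hlt : ∀ (s t : Set (Aff N)) (p q : zClosed s ∧ zIrred s ∧ s ⊆ cone (secantVar X))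
            (hq : zClosed t ∧ zIrred t ∧ t ⊆ cone (secantVar X)), True := fun _ _ _ _ _ => trivial
        have hFstep : ∀ i : Fin (2*n+2), F i.castSucc < F i.succ := by
          intro i
          have hic : ((i.castSucc : Fin (2*n+2+1)) : ℕ) = (i : ℕ) := rfl
          have his : ((i.succ : Fin (2*n+2+1)) : ℕ) = (i : ℕ) + 1 := rfl
          have hibd : (i : ℕ) < 2*n+2 := i.isLt
          rcases lt_trichotomy (i : ℕ) (2*n) with hi | hi | hi
          · have h1 : ((i.castSucc : Fin (2*n+2+1)) : ℕ) < 2*n+1 := by omega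
            have h2 : ((i.succ : Fin (2*n+2+1)) : ℕ) < 2*n+1 := by omega
            rw [hFval1 _ h1, hFval1 _ h2]
            rw [Subtype.mk_lt_mk]
            have hstep := hf0step ⟨(i : ℕ), hi⟩
            have hca : (Fin.castSucc ⟨(i : ℕ), hi⟩ : Fin (2*n+1)) = ⟨((i.castSucc : Fin (2*n+2+1)) : ℕ), h1⟩ := by
              ext; simp [hic]
            have hsu : (Fin.succ ⟨(i : ℕ), hi⟩ : Fin (2*n+1)) = ⟨((i.succ : Fin (2*n+2+1)) : ℕ), h2⟩ := by
              ext; simp [his]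
            rw [hca, hsu] at hstep
            exact SetLike.coe_ssubset_coe.2 hstep
          · have h1 : ((i.castSucc : Fin (2*n+2+1)) : ℕ) < 2*n+1 := by omega
            have h2 : ((i.succ : Fin (2*n+2+1)) : ℕ) = 2*n+1 := by omega
            rw [hFval1 _ h1, hFval2 _ h2]
            rw [Subtype.mk_lt_mk]
            have hMeq : f0 ⟨((i.castSucc : Fin (2*n+2+1)) : ℕ), h1⟩ = (S.Fsub w ⊔ S.Fsub w' : Submodule ℂ (Aff N)) := by
              rw [← hf0last]
              congr 1
              ext
              simp [hic, Fin.val_last]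
              omega
            rw [hMeq]
            exact lt_of_le_of_ne hMsubA (fun hcon => hc0M (hcon ▸ hc0A))
          · have h1 : ((i.castSucc : Fin (2*n+2+1)) : ℕ) = 2*n+1 := by omega
            have h2 : ((i.succ : Fin (2*n+2+1)) : ℕ) = 2*n+2 := by omega
            rw [hFval2 _ h1, hFval3 _ h2]
            rw [Subtype.mk_lt_mk]
            exact lt_of_le_of_ne hAsubS (fun hcon => hx1A (hcon ▸ hx1S))
        have hlen := length_le_adim F hFstep
        exact absurd hdef (not_lt.2 hlen)
  · -- degenerate case: at most one fibre
    push_neg at hW2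
    by_cases hWne : ∃ w, w ∈ S.W
    · obtain ⟨w0, hw0⟩ := hWne
      have hCsub : cone X ⊆ ((S.Fsub w0 : Submodule ℂ (Aff N)) : Set (Aff N)) := by
        intro v hvC
        rcases eq_or_ne v 0 with rfl | hv
        · exact (S.Fsub w0).zero_mem
        · obtain ⟨w, hwW, hvF⟩ := hCcover v hvC hv
          rw [hW2 w hwW w0 hw0] at hvF
          exact hvF
      have hFtop : S.Fsub w0 = ⊤ := by
        rw [eq_top_iff, ← hnd]
        exact Submodule.span_le.2 hCsub
      have hXuniv : ∀ z : Proj N, z ∈ X := by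
        intro z
        rw [S.cover]
        refine Set.mem_iUnion₂.2 ⟨w0, hw0, ?_⟩
        show z.submodule ≤ S.Fsub w0
        rw [hFtop]
        exact le_top
      rcases Nat.eq_zero_or_pos N with hN | hN
      · -- impossible: the cone over X would be at most a line
        exfalso
        subst hN
        have h2le : ((2:ℕ) : WithBot ℕ∞) ≤ adim (cone X) := by
          rw [hXdim]
          have : (2:ℕ) ≤ n + 1 := by omega
          exact_mod_cast this
        obtain ⟨a', b', c', hab, hbc⟩ := exists_three_of_two_le h2le
        obtain ⟨a, haA⟩ := a'.2.2.1.1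
        have haB : a ∈ (b' : {W : Set (Aff 0) // zClosed W ∧ zIrred W ∧ W ⊆ cone X}).1 :=
          (le_of_lt hab) haA
        obtain ⟨b, hbB, hbA⟩ := Set.exists_of_ssubset (show a'.1 ⊂ b'.1 from hab)
        obtain ⟨u, huC, huB⟩ := Set.exists_of_ssubset (show b'.1 ⊂ c'.1 from hbc)
        obtain ⟨SB, hSB⟩ := b'.2.1
        have hpexists : ∃ p ∈ SB, eval u p ≠ 0 := by
          by_contra hall
          push_neg at hall
          exact huB (by rw [hSB]; exact fun p hp => hall p hp)
        obtain ⟨p, hpSB, hpu⟩ := hpexists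
        set d : Aff 0 := b - a with hd
        have hba : b ≠ a := fun h => hbA (h ▸ haA)
        have hd0 : d 0 ≠ 0 := by
          intro h
          apply hba
          have hdz : d = 0 := by
            funext i
            have hi : i = (0 : Fin (0+1)) := Fin.ext (by have := i.isLt; omega)
            rw [hi, h]
            simp
          have hba' : b - a = 0 := by rw [← hd]; exact hdz
          exact sub_eq_zero.1 hba'
        have hparam : ∀ x : Aff 0, a + ((x 0 - a 0) / d 0) • d = x := by
          intro x
          funext i
          have hi : i = (0 : Fin (0+1)) := Fin.ext (by have := i.isLt; omega)
          rw [hi]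
          simp only [Pi.add_apply, Pi.smul_apply, smul_eq_mul]
          rw [div_mul_cancel₀ _ hd0]
          ring
        have hBfin : (b'.1).Finite := by
          have hfin := finite_line_inter (⟨SB, hSB⟩ : zClosed b'.1) a d ((u 0 - a 0)/d 0)
            (by rw [hparam u]; exact huB)
          refine (hfin.image (fun t => a + t • d)).subset ?_
          intro x hx
          refine ⟨(x 0 - a 0)/d 0, ?_, hparam x⟩
          rw [Set.mem_setOf_eq, hparam x]
          exact hx
        have hsplit := b'.2.2.1.2 {a} (b'.1 \ {a}) (zClosed_singleton a)
          (zClosed_finite (hBfin.subset Set.diff_subset))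
          (by
            intro x hx
            by_cases h : x = a
            · exact Or.inl h
            · exact Or.inr ⟨hx, h⟩)
        rcases hsplit with h | h
        · exact hba (h hbB)
        · exact (h haB).2 rfl
      · -- positive dimension and a single linear fibre: everything is a secant
        apply hfinish
        have h1N : (1 : ℕ) < N + 1 := by omega
        set e0 : Aff N := Pi.single (0 : Fin (N+1)) (1:ℂ) with he0def
        set e1 : Aff N := Pi.single (⟨1, h1N⟩ : Fin (N+1)) (1:ℂ) with he1def
        have he0 : e0 ≠ 0 := by
          intro h
          have := congrFun h (0 : Fin (N+1))
          rw [he0def] at this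
          simp at this
        have he1 : e1 ≠ 0 := by
          intro h
          have := congrFun h (⟨1, h1N⟩ : Fin (N+1))
          rw [he1def] at this
          simp at this
        have hne : Projectivization.mk ℂ e0 he0 ≠ Projectivization.mk ℂ e1 he1 := by
          intro h
          obtain ⟨c, hc⟩ := (Projectivization.mk_eq_mk_iff' ℂ _ _ he0 he1).1 h
          have h0 := congrFun hc (0 : Fin (N+1))
          rw [he0def, he1def] at h0
          have hz : (0 : Fin (N+1)) ≠ (⟨1, h1N⟩ : Fin (N+1)) := by
            intro hcon
            have := congrArg Fin.val hcon
            simp at this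
          simp [Pi.single_apply, hz] at h0
        have hRuniv : ∀ v : Aff N, v ∈ cone raw := by
          intro v
          rcases eq_or_ne v 0 with rfl | hv
          · exact h0R
          · refine Or.inl ⟨hv, ?_⟩
            rcases eq_or_ne (Projectivization.mk ℂ v hv) (Projectivization.mk ℂ e0 he0) with h | h
            · refine ⟨Projectivization.mk ℂ v hv, hXuniv _,
                Projectivization.mk ℂ e1 he1, hXuniv _, ?_, ?_⟩
              · rw [h]; exact hne
              · show (Projectivization.mk ℂ v hv).submodule ≤ _
                exact le_sup_left
            · refine ⟨Projectivization.mk ℂ v hv, hXuniv _,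
                Projectivization.mk ℂ e0 he0, hXuniv _, h, ?_⟩
              show (Projectivization.mk ℂ v hv).submodule ≤ _
              exact le_sup_left
        exact Set.eq_univ_iff_forall.2 fun v => subset_zClosure _ (hRuniv v)
    · -- no fibres at all: contradicts nondegeneracy
      exfalso
      push_neg at hWne
      have hC0 : cone X ⊆ {0} := by
        intro v hvC
        rcases eq_or_ne v 0 with rfl | hv
        · rfl
        · obtain ⟨w, hwW, _⟩ := hCcover v hvC hv
          exact absurd hwW (hWne w)
      have hbot : (⊤ : Submodule ℂ (Aff N)) ≤ ⊥ := by
        rw [← hnd]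
        refine Submodule.span_le.2 ?_
        intro v hv
        rw [Set.eq_of_mem_singleton (hC0 hv)]
        exact Submodule.zero_mem ⊥
      have h1 : (Pi.single (0 : Fin (N+1)) (1:ℂ) : Aff N) = 0 :=
        (Submodule.mem_bot ℂ).1 (hbot Submodule.mem_top)
      have := congrFun h1 (0 : Fin (N+1))
      simp at this
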